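/- arXiv:1404.0697 — 4 statements merged into one kernel-verified Lean document; each statement's English description precedes it below -/
import Mathlib

section
/- Let G be an α-quasirandom graph of density d with at most (3/2)n vertices, and let V' ⊆ V(G) satisfy |V'| ≥ εn. Then the induced subgraph G[V'] is (3α/ε²)-quasirandom of density d ± 3α/ε². -/
open Finset

/-- Induced subgraphs of quasirandom graphs inherit quasirandomness and density. -/
theorem statement1 {V : Type} [Fintype V] [DecidableEq V]
    (G : SimpleGraph V) [DecidableRel G.Adj] (n : ℕ) (ε α d : ℝ)
    (hε : 0 < ε) (hα : 0 < α)
    (horder : (Fintype.card V : ℝ) ≤ 3 / 2 * n)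
    (hquasi : ∀ B : Finset V,
      |(((B ×ˢ B).filter fun p => G.Adj p.1 p.2).card : ℝ) / 2
        - d * (B.card.choose 2 : ℝ)| ≤ α * (Fintype.card V : ℝ) ^ 2)
    (V' : Finset V) (hV' : ε * n ≤ (V'.card : ℝ)) :
    ∃ d' : ℝ, |d' - d| ≤ 3 * α / ε ^ 2 ∧
      ∀ B ⊆ V',
        |(((B ×ˢ B).filter fun p => G.Adj p.1 p.2).card : ℝ) / 2
          - d' * (B.card.choose 2 : ℝ)| ≤ 3 * α / ε ^ 2 * (V'.card : ℝ) ^ 2 := by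
  refine ⟨d, by simpa using (by positivity : (0:ℝ) ≤ 3 * α / ε ^ 2), fun B _ => ?_⟩
  refine (hquasi B).trans ?_
  have h0 : (0:ℝ) ≤ Fintype.card V := Nat.cast_nonneg _
  have hεn : (0:ℝ) ≤ ε * n := by positivity
  have hsq : (Fintype.card V : ℝ) ^ 2 ≤ (3 / 2 * n) ^ 2 := by nlinarith
  rw [div_mul_eq_mul_div, le_div_iff₀ (by positivity)]
  nlinarith [mul_le_mul_of_nonneg_left hsq hα.le, pow_le_pow_left₀ hεn hV' 2, sq_nonneg (ε * n)]
end

section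
/- For every M ∈ (0,1] and every a ∈ (−0.5, ∞), we have M − |a| ≤ M^{1+a} ≤ M + |a|. -/
/-- Key lemma: for x ∈ (0,1] and b ∈ [0,1], x^b ≤ x + (1-b). -/
lemma aux_rpow_le (x b : ℝ) (hx0 : 0 < x) (hx1 : x ≤ 1) (hb0 : 0 ≤ b) (hb1 : b ≤ 1) :
    x ^ b ≤ x + (1 - b) := by
  have h := Real.geom_mean_le_arith_mean2_weighted (w₁ := b) (w₂ := 1 - b) (p₁ := x)
    (p₂ := 1) hb0 (by linarith) hx0.le zero_le_one (by ring)
  rw [Real.one_rpow, mul_one, mul_one] at h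
  nlinarith [hx0.le]

/-- For M ∈ (0,1] and a > −0.5, we have M − |a| ≤ M^{1+a} ≤ M + |a|. -/
theorem statement2 (M a : ℝ) (hM0 : 0 < M) (hM1 : M ≤ 1) (ha : -0.5 < a) :
    M - |a| ≤ M ^ (1 + a) ∧ M ^ (1 + a) ≤ M + |a| := by
  rcases le_or_gt 0 a with h | h
  · rw [abs_of_nonneg h]
    constructor
    · -- M - a ≤ M^(1+a): Bernoulli via exp
      have hlog : Real.log M ≤ 0 := Real.log_nonpos hM0.le hM1
      have hlog2 : -Real.log M ≤ 1 / M - 1 := by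
        have := Real.log_le_sub_one_of_pos (x := 1 / M) (by positivity)
        rwa [Real.log_div one_ne_zero hM0.ne', Real.log_one, zero_sub] at this
      have hber : 1 + a * Real.log M ≤ M ^ a := by
        rw [Real.rpow_def_of_pos hM0]
        have := Real.add_one_le_exp (Real.log M * a)
        nlinarith
      have key : M * (1 + a * Real.log M) ≤ M ^ (1 + a) := by
        rw [Real.rpow_add hM0, Real.rpow_one]
        exact mul_le_mul_of_nonneg_left hber hM0.le
      have h2 : -1 ≤ M * Real.log M := by
        have : M * (-Real.log M) ≤ M * (1 / M - 1) :=
          mul_le_mul_of_nonneg_left hlog2 hM0.le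
        have hMinv : M * (1 / M) = 1 := by field_simp
        nlinarith
      nlinarith [mul_nonneg h (neg_nonneg.mpr hlog)]
    · -- M^(1+a) ≤ M ≤ M + a
      have : M ^ (1 + a) ≤ M ^ (1 : ℝ) :=
        Real.rpow_le_rpow_of_exponent_ge hM0 hM1 (by linarith)
      rw [Real.rpow_one] at this
      linarith
  · rw [abs_of_neg h]
    constructor
    · -- M + a ≤ M ≤ M^(1+a)
      have : M ^ (1 : ℝ) ≤ M ^ (1 + a) :=
        Real.rpow_le_rpow_of_exponent_ge hM0 hM1 (by linarith)
      rw [Real.rpow_one] at this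
      linarith
    · have := aux_rpow_le M (1 + a) hM0 hM1 (by linarith) (by linarith)
      linarith
end

section
/- Let h : Ω → ℝ be a C-Lipschitz function on a finite product probability space Ω = Ω₁ × ⋯ × Ω_k (changing one coordinate changes h by at most C). Then for each t > 0, P[|h − E[h]| > t] ≤ 2·exp(−2t²/(C²k)). -/
open MeasureTheory

open Real

universe u



lemma q_pos (p : ℝ) (hp0 : 0 ≤ p) (hp1 : p ≤ 1) (h : ℝ) :
    0 < 1 - p + p * Real.exp h := by
  rcases eq_or_lt_of_le hp1 with rfl | hp1
  · simpa using Real.exp_pos h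
  · have : 0 ≤ p * Real.exp h := mul_nonneg hp0 (Real.exp_pos h).le
    linarith

lemma key_ineq (p : ℝ) (hp0 : 0 ≤ p) (hp1 : p ≤ 1) (h : ℝ) :
    1 - p + p * Real.exp h ≤ Real.exp (p * h + h ^ 2 / 8) := by
  have hq := q_pos p hp0 hp1
  set q : ℝ → ℝ := fun x => 1 - p + p * Real.exp x with hqdef
  -- derivative facts
  have hqd : ∀ x, HasDerivAt q (p * Real.exp x) x := by
    intro x
    exact ((Real.hasDerivAt_exp x).const_mul p).const_add (1 - p)
  set L1 : ℝ → ℝ := fun x => p * Real.exp x / q x with hL1def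
  have hLd : ∀ x, HasDerivAt (fun x => Real.log (q x)) (L1 x) x := by
    intro x
    exact (hqd x).log (hq x).ne'
  -- second derivative of log q
  set L2 : ℝ → ℝ := fun x => p * Real.exp x * (1 - p) / (q x) ^ 2 with hL2def
  have hL1d : ∀ x, HasDerivAt L1 (L2 x) x := by
    intro x
    have := ((hqd x).div (hqd x) (hq x).ne')
    -- derivative of (p e^x)/(q x) is (p e^x * q x - p e^x * p e^x)/q^2
    have h2 : HasDerivAt L1 ((p * Real.exp x * q x - p * Real.exp x * (p * Real.exp x)) / (q x) ^ 2) x := by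
      have hnum : HasDerivAt (fun x => p * Real.exp x) (p * Real.exp x) x := by
        simpa using (Real.hasDerivAt_exp x).const_mul p
      exact hnum.div (hqd x) (hq x).ne'
    convert h2 using 1
    have : q x = 1 - p + p * Real.exp x := rfl
    field_simp [hL2def]
    ring
  have hL2le : ∀ x, L2 x ≤ 1 / 4 := by
    intro x
    have hqx : q x = 1 - p + p * Real.exp x := rfl
    have hx : (0:ℝ) < q x := hq x
    rw [hL2def]
    rw [div_le_iff₀ (pow_pos hx 2), hqx]
    nlinarith [sq_nonneg ((1 - p) - p * Real.exp x)]
  -- D1 = derivative of the difference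
  set D : ℝ → ℝ := fun x => p * x + x ^ 2 / 8 - Real.log (q x) with hDdef
  set D1 : ℝ → ℝ := fun x => p + x / 4 - L1 x with hD1def
  have hDd : ∀ x, HasDerivAt D (D1 x) x := by
    intro x
    have h1 : HasDerivAt (fun x : ℝ => p * x + x ^ 2 / 8) (p + x / 4) x := by
      have := ((hasDerivAt_id x).const_mul p).add (((hasDerivAt_pow 2 x)).div_const 8)
      exact this.congr_deriv (by rw [show (2:ℕ) - 1 = 1 from rfl]; push_cast; ring)
    exact h1.sub (hLd x)
  have hD1d : ∀ x, HasDerivAt D1 (1 / 4 - L2 x) x := by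
    intro x
    have h1 : HasDerivAt (fun x : ℝ => p + x / 4) (1 / 4) x := by
      simpa using ((hasDerivAt_id x).div_const 4).const_add p
    exact h1.sub (hL1d x)
  have hD1mono : Monotone D1 := by
    apply monotone_of_deriv_nonneg
    · intro x; exact (hD1d x).differentiableAt
    · intro x
      rw [(hD1d x).deriv]
      linarith [hL2le x]
  have hD10 : D1 0 = 0 := by
    simp [hD1def, hL1def, hqdef]
  have hD0 : D 0 = 0 := by
    simp [hDdef, hqdef]
  have hDdiff : Differentiable ℝ D := fun x => (hDd x).differentiableAt
  have hDnonneg : 0 ≤ D h := by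
    rcases le_total 0 h with hh | hh
    · have hm : MonotoneOn D (Set.Ici 0) :=
        monotoneOn_of_deriv_nonneg (convex_Ici 0) hDdiff.continuous.continuousOn
          (hDdiff.differentiableOn)
          (fun x hx => by
            rw [(hDd x).deriv, ← hD10]
            exact hD1mono (le_of_lt (by simpa using hx)))
      have := hm (Set.self_mem_Ici) (Set.mem_Ici.mpr hh) hh
      rw [hD0] at this; exact this
    · have hm : AntitoneOn D (Set.Iic 0) :=
        antitoneOn_of_deriv_nonpos (convex_Iic 0) hDdiff.continuous.continuousOn
          (hDdiff.differentiableOn)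
          (fun x hx => by
            rw [(hDd x).deriv, ← hD10]
            exact hD1mono (le_of_lt (by simpa using hx)))
      have := hm (Set.mem_Iic.mpr hh) (Set.self_mem_Iic) hh
      rw [hD0] at this; exact this
  have hDh : D h = p * h + h ^ 2 / 8 - Real.log (1 - p + p * Real.exp h) := rfl
  rw [← Real.exp_log (hq h)]
  rw [hDh] at hDnonneg
  exact Real.exp_le_exp.mpr (by linarith)

lemma bdd_integrable {Ω : Type*} [MeasurableSpace Ω] (μ : Measure Ω) [IsProbabilityMeasure μ]
    (X : Ω → ℝ) (hX : Measurable X) (M : ℝ) (hM : ∀ ω, |X ω| ≤ M) : Integrable X μ := by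
  exact Integrable.mono' (integrable_const M) hX.aestronglyMeasurable
    (Filter.Eventually.of_forall fun ω => by simpa using hM ω)

lemma hoeffding {Ω : Type*} [MeasurableSpace Ω] (μ : Measure Ω) [IsProbabilityMeasure μ]
    (X : Ω → ℝ) (hX : Measurable X) (a b : ℝ)
    (hab : ∀ ω, a ≤ X ω ∧ X ω ≤ b) (hmean : ∫ x, X x ∂μ = 0) (s : ℝ) :
    ∫ x, Real.exp (s * X x) ∂μ ≤ Real.exp (s ^ 2 * (b - a) ^ 2 / 8) := by
  have hXa : ∀ ω, |X ω| ≤ max |a| |b| := fun ω => abs_le.mpr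
    ⟨le_trans (neg_le_neg (le_max_left |a| |b|)) (le_trans (neg_abs_le a) (hab ω).1),
     le_trans (hab ω).2 (le_trans (le_abs_self b) (le_max_right |a| |b|))⟩
  have hXint : Integrable X μ := bdd_integrable μ X hX _ hXa
  have ha0 : a ≤ 0 := by
    have : ∫ x, (a : ℝ) ∂μ ≤ ∫ x, X x ∂μ :=
      integral_mono (integrable_const a) hXint fun ω => (hab ω).1
    simpa [hmean] using this
  have hb0 : 0 ≤ b := by
    have : ∫ x, X x ∂μ ≤ ∫ x, (b : ℝ) ∂μ :=
      integral_mono hXint (integrable_const b) fun ω => (hab ω).2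
    simpa [hmean] using this
  rcases eq_or_lt_of_le (le_trans ha0 hb0) with hab2 | haltb
  · -- a = b = 0, X = 0
    have ha : a = 0 := le_antisymm ha0 (hab2 ▸ hb0 : _)
    have hb : b = 0 := (ha ▸ hab2).symm
    have hX0 : ∀ ω, X ω = 0 := fun ω => le_antisymm (hb ▸ (hab ω).2) (ha ▸ (hab ω).1)
    simp only [hX0, mul_zero, Real.exp_zero, integral_const, measure_univ, probReal_univ, ENNReal.toReal_one,
      smul_eq_mul, mul_one]
    exact Real.one_le_exp (by positivity)
  · have hba : 0 < b - a := sub_pos.mpr haltb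
    set p : ℝ := -a / (b - a) with hp
    have hp0 : 0 ≤ p := div_nonneg (neg_nonneg.mpr ha0) hba.le
    have hp1 : p ≤ 1 := by
      rw [hp, div_le_one hba]; linarith
    -- pointwise convexity bound
    have hconv : ∀ ω, Real.exp (s * X ω) ≤
        (b - X ω) / (b - a) * Real.exp (s * a) + (X ω - a) / (b - a) * Real.exp (s * b) := by
      intro ω
      have h1 : 0 ≤ (b - X ω) / (b - a) := div_nonneg (by linarith [(hab ω).2]) hba.le
      have h2 : 0 ≤ (X ω - a) / (b - a) := div_nonneg (by linarith [(hab ω).1]) hba.le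
      have h3 : (b - X ω) / (b - a) + (X ω - a) / (b - a) = 1 := by
        field_simp
        ring
      have hcx := convexOn_exp.2 (Set.mem_univ (s * a)) (Set.mem_univ (s * b)) h1 h2 h3
      have harg : (b - X ω) / (b - a) * (s * a) + (X ω - a) / (b - a) * (s * b) = s * X ω := by
        field_simp
        ring
      rw [← harg]
      simpa using hcx
    -- integrate
    have hint1 : Integrable (fun ω => Real.exp (s * X ω)) μ := by
      refine bdd_integrable μ _ (by fun_prop) (Real.exp (|s| * max |a| |b|)) fun ω => ?_
      rw [abs_of_pos (Real.exp_pos _)]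
      apply Real.exp_le_exp.mpr
      calc s * X ω ≤ |s * X ω| := le_abs_self _
        _ = |s| * |X ω| := abs_mul s (X ω)
        _ ≤ |s| * max |a| |b| := by
            exact mul_le_mul_of_nonneg_left (hXa ω) (abs_nonneg s)
    have hA : Integrable (fun x => (b - X x) / (b - a) * Real.exp (s * a)) μ := by
      exact ((((integrable_const b).sub hXint).div_const _).mul_const _)
    have hB : Integrable (fun x => (X x - a) / (b - a) * Real.exp (s * b)) μ := by
      exact (((hXint.sub (integrable_const a)).div_const _).mul_const _)
    have hint2 : Integrable (fun ω =>
        (b - X ω) / (b - a) * Real.exp (s * a) + (X ω - a) / (b - a) * Real.exp (s * b)) μ :=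
      hA.add hB
    have hmain : ∫ x, Real.exp (s * X x) ∂μ ≤
        b / (b - a) * Real.exp (s * a) + (-a) / (b - a) * Real.exp (s * b) := by
      calc ∫ x, Real.exp (s * X x) ∂μ
          ≤ ∫ x, ((b - X x) / (b - a) * Real.exp (s * a)
              + (X x - a) / (b - a) * Real.exp (s * b)) ∂μ :=
            integral_mono hint1 hint2 hconv
        _ = b / (b - a) * Real.exp (s * a) + (-a) / (b - a) * Real.exp (s * b) := by
            rw [integral_add hA hB, integral_mul_const, integral_mul_const,
              integral_div, integral_div,
              integral_sub (integrable_const b) hXint, integral_sub hXint (integrable_const a),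
              hmean, integral_const]
            simp
    -- use key inequality
    have hkey := key_ineq p hp0 hp1 (s * (b - a))
    have hrw : b / (b - a) * Real.exp (s * a) + (-a) / (b - a) * Real.exp (s * b)
        = Real.exp (s * a) * (1 - p + p * Real.exp (s * (b - a))) := by
      have hexp : Real.exp (s * b) = Real.exp (s * a) * Real.exp (s * (b - a)) := by
        rw [← Real.exp_add]; ring_nf
      rw [hexp, hp]
      field_simp
      ring
    calc ∫ x, Real.exp (s * X x) ∂μ
        ≤ Real.exp (s * a) * (1 - p + p * Real.exp (s * (b - a))) := by rw [← hrw]; exact hmain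
      _ ≤ Real.exp (s * a) * Real.exp (p * (s * (b - a)) + (s * (b - a)) ^ 2 / 8) :=
          mul_le_mul_of_nonneg_left hkey (Real.exp_pos _).le
      _ = Real.exp (s * a + p * (s * (b - a)) + (s * (b - a)) ^ 2 / 8) := by
          rw [← Real.exp_add]; ring_nf
      _ = Real.exp (s ^ 2 * (b - a) ^ 2 / 8) := by
          congr 1
          rw [hp]
          field_simp
          ring

lemma hoeffding' {Ω : Type*} [MeasurableSpace Ω] (μ : Measure Ω) [IsProbabilityMeasure μ]
    (X : Ω → ℝ) (hX : Measurable X) (a C : ℝ)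
    (hab : ∀ ω, a ≤ X ω ∧ X ω ≤ a + C) (s : ℝ) :
    ∫ x, Real.exp (s * X x) ∂μ ≤ Real.exp (s * ∫ x, X x ∂μ + s ^ 2 * C ^ 2 / 8) := by
  set m := ∫ x, X x ∂μ with hm
  have hXa : ∀ ω, |X ω| ≤ max |a| |a + C| := fun ω => abs_le.mpr
    ⟨le_trans (neg_le_neg (le_max_left _ _)) (le_trans (neg_abs_le a) (hab ω).1),
     le_trans (hab ω).2 (le_trans (le_abs_self _) (le_max_right _ _))⟩
  have hXint : Integrable X μ := bdd_integrable μ X hX _ hXa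
  have h0 := hoeffding μ (fun ω => X ω - m) (hX.sub measurable_const) (a - m) (a + C - m)
    (fun ω => ⟨by linarith [(hab ω).1], by linarith [(hab ω).2]⟩)
    (by rw [integral_sub hXint (integrable_const m), integral_const]; simp [hm]) s
  have : (fun x => Real.exp (s * (X x - m))) = fun x => Real.exp (s * X x) * Real.exp (-(s * m)) := by
    funext x; rw [← Real.exp_add]; ring_nf
  rw [this, integral_mul_const] at h0
  calc ∫ x, Real.exp (s * X x) ∂μ
      = (∫ x, Real.exp (s * X x) ∂μ) * Real.exp (-(s * m)) * Real.exp (s * m) := by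
        rw [mul_assoc, ← Real.exp_add]; simp
    _ ≤ Real.exp (s ^ 2 * (a + C - m - (a - m)) ^ 2 / 8) * Real.exp (s * m) :=
        mul_le_mul_of_nonneg_right h0 (Real.exp_pos _).le
    _ = Real.exp (s * m + s ^ 2 * C ^ 2 / 8) := by rw [← Real.exp_add]; ring_nf

lemma osc_finset {k : ℕ} {Ω : Fin k → Type u} (f : (∀ i, Ω i) → ℝ) (C : ℝ)
    (hLip : ∀ (ω ω' : ∀ i, Ω i) (i : Fin k),
      (∀ j, j ≠ i → ω j = ω' j) → |f ω - f ω'| ≤ C) :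
    ∀ (S : Finset (Fin k)) (ω ω' : ∀ i, Ω i),
      (∀ j ∉ S, ω j = ω' j) → |f ω - f ω'| ≤ S.card * C := by
  intro S
  induction S using Finset.induction_on with
  | empty =>
    intro ω ω' h
    have : ω = ω' := funext fun j => h j (Finset.notMem_empty j)
    simp [this]
  | @insert i S hiS ih =>
    intro ω ω' h
    set ω'' : ∀ i, Ω i := Function.update ω i (ω' i) with hω''
    have h1 : |f ω - f ω''| ≤ C := by
      apply hLip ω ω'' i
      intro j hj
      rw [hω'', Function.update_of_ne hj]
    have h2 : |f ω'' - f ω'| ≤ S.card * C := by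
      apply ih
      intro j hj
      by_cases hji : j = i
      · subst hji; rw [hω'', Function.update_self]
      · rw [hω'', Function.update_of_ne hji]
        exact h j (by simp [hji, hj])
    calc |f ω - f ω'| ≤ |f ω - f ω''| + |f ω'' - f ω'| := by
          have := abs_sub_le (f ω) (f ω'') (f ω')
          linarith
      _ ≤ C + S.card * C := add_le_add h1 h2
      _ = (insert i S).card * C := by
          rw [Finset.card_insert_of_notMem hiS]
          push_cast
          ring

lemma osc {k : ℕ} {Ω : Fin k → Type u} (f : (∀ i, Ω i) → ℝ) (C : ℝ)
    (hLip : ∀ (ω ω' : ∀ i, Ω i) (i : Fin k),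
      (∀ j, j ≠ i → ω j = ω' j) → |f ω - f ω'| ≤ C)
    (ω ω' : ∀ i, Ω i) : |f ω - f ω'| ≤ k * C := by
  have := osc_finset f C hLip Finset.univ ω ω' (fun j hj => absurd (Finset.mem_univ j) hj)
  simpa using this

lemma mgf_bound : ∀ (k : ℕ) (Ω : Fin k → Type u) [∀ i, MeasurableSpace (Ω i)]
    (μ : ∀ i, Measure (Ω i)) [∀ i, IsProbabilityMeasure (μ i)]
    (f : (∀ i, Ω i) → ℝ) (_ : Measurable f) (C : ℝ) (_ : 0 ≤ C)
    (_ : ∀ (ω ω' : ∀ i, Ω i) (i : Fin k),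
      (∀ j, j ≠ i → ω j = ω' j) → |f ω - f ω'| ≤ C) (s : ℝ),
    ∫ ω, Real.exp (s * f ω) ∂(Measure.pi μ)
      ≤ Real.exp (s * ∫ ω, f ω ∂(Measure.pi μ) + s ^ 2 * C ^ 2 * k / 8) := by
  intro k
  induction k with
  | zero =>
    intro Ω instM μ instP f hf C hC hLip s
    haveI := instP
    rw [integral_unique, integral_unique]
    simp [measure_univ]
  | succ k ih =>
    intro Ω instM μ instP f hf C hC hLip s
    haveI := instP
    -- setup
    haveI : ∀ i, Nonempty (Ω i) := by
      intro i
      by_contra hne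
      rw [not_nonempty_iff] at hne
      have h1 : (μ i) Set.univ = 1 := measure_univ
      rw [Set.univ_eq_empty_iff.mpr hne, measure_empty] at h1
      exact zero_ne_one h1
    obtain ⟨ω₀⟩ : Nonempty (∀ i, Ω i) := ⟨fun i => Classical.arbitrary _⟩
    set M : ℝ := |f ω₀| + (k + 1) * C with hM
    have hfbd : ∀ ω, |f ω| ≤ M := by
      intro ω
      have := osc f C hLip ω ω₀
      rw [hM]
      push_cast at this ⊢
      calc |f ω| ≤ |f ω - f ω₀| + |f ω₀| := by
            have := abs_add_le (f ω - f ω₀) (f ω₀); simpa using this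
        _ ≤ (k + 1) * C + |f ω₀| := by linarith
        _ = |f ω₀| + (k + 1) * C := by ring
    set e := MeasurableEquiv.piFinSuccAbove Ω 0 with he
    set ν := Measure.pi (fun j => μ ((0 : Fin (k+1)).succAbove j)) with hν
    set μ0 := μ 0 with hμ0
    have hmp := measurePreserving_piFinSuccAbove μ 0
    haveI : IsProbabilityMeasure ν := by rw [hν]; infer_instance
    haveI : IsProbabilityMeasure μ0 := by rw [hμ0]; infer_instance
    have hνuniv : ν Set.univ = 1 := measure_univ
    have hνconst : ∀ c : ℝ, ∫ _, c ∂ν = c := fun c => by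
      rw [integral_const]; simp only [Measure.real, hνuniv, ENNReal.toReal_one, one_smul]
    set g : Ω 0 × (∀ j, Ω ((0 : Fin (k+1)).succAbove j)) → ℝ := fun z => f (e.symm z) with hg
    have hgmeas : Measurable g := hf.comp e.symm.measurable
    have hgbd : ∀ z, |g z| ≤ M := fun z => hfbd _
    have hesymm : ∀ x y, e.symm (x, y) = Fin.insertNth 0 x y := fun x y => rfl
    -- for fixed x, y-section is Lipschitz
    have hsectionLip : ∀ (x : Ω 0) (y y' : ∀ j, Ω ((0 : Fin (k+1)).succAbove j)) (j : Fin k),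
        (∀ j', j' ≠ j → y j' = y' j') → |g (x, y) - g (x, y')| ≤ C := by
      intro x y y' j hyy
      apply hLip _ _ ((0 : Fin (k+1)).succAbove j)
      intro i hi
      rw [hesymm, hesymm]
      rcases eq_or_ne i 0 with rfl | hi0
      · rw [Fin.insertNth_apply_same, Fin.insertNth_apply_same]
      · obtain ⟨j', rfl⟩ := Fin.exists_succAbove_eq hi0
        rw [Fin.insertNth_apply_succAbove, Fin.insertNth_apply_succAbove]
        exact hyy j' (fun hj => hi (by rw [hj]))
    -- x-oscillation bound
    have hxLip : ∀ (x x' : Ω 0) (y : ∀ j, Ω ((0 : Fin (k+1)).succAbove j)),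
        |g (x, y) - g (x', y)| ≤ C := by
      intro x x' y
      apply hLip _ _ 0
      intro i hi
      rw [hesymm, hesymm]
      obtain ⟨j', rfl⟩ := Fin.exists_succAbove_eq hi
      rw [Fin.insertNth_apply_succAbove, Fin.insertNth_apply_succAbove]
    -- marginal F
    set F : Ω 0 → ℝ := fun x => ∫ y, g (x, y) ∂ν with hF
    have hFmeas : Measurable F := by
      have : StronglyMeasurable g := hgmeas.stronglyMeasurable
      exact this.integral_prod_right'.measurable
    have hgint : Integrable g (μ0.prod ν) := bdd_integrable _ g hgmeas M hgbd
    have hFbd : ∀ x, |F x| ≤ M := by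
      intro x
      rw [hF]
      calc |∫ y, g (x, y) ∂ν| ≤ ∫ y, |g (x, y)| ∂ν := by
            simpa [Real.norm_eq_abs] using norm_integral_le_integral_norm (fun y => g (x, y)) (μ := ν)
        _ ≤ ∫ _, M ∂ν := integral_mono
            ((bdd_integrable _ _ (hgmeas.comp measurable_prodMk_left) M
              (fun y => hgbd (x, y))).abs)
            (integrable_const M) (fun y => hgbd (x, y))
        _ = M := hνconst M
    have hFosc : ∀ x x', |F x - F x'| ≤ C := by
      intro x x'
      rw [hF]
      have hix : Integrable (fun y => g (x, y)) ν :=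
        bdd_integrable _ _ (hgmeas.comp measurable_prodMk_left) M (fun y => hgbd (x, y))
      have hix' : Integrable (fun y => g (x', y)) ν :=
        bdd_integrable _ _ (hgmeas.comp measurable_prodMk_left) M (fun y => hgbd (x', y))
      rw [← integral_sub hix hix']
      calc |∫ y, (g (x, y) - g (x', y)) ∂ν| ≤ ∫ y, |g (x, y) - g (x', y)| ∂ν := by
            simpa [Real.norm_eq_abs] using
              norm_integral_le_integral_norm (fun y => g (x, y) - g (x', y)) (μ := ν)
        _ ≤ ∫ _, C ∂ν := integral_mono ((hix.sub hix').abs) (integrable_const C)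
            (fun y => hxLip x x' y)
        _ = C := hνconst C
    -- change variables
    have hchange : ∀ (φ : (∀ i, Ω i) → ℝ),
        ∫ ω, φ ω ∂(Measure.pi μ) = ∫ z, φ (e.symm z) ∂(μ0.prod ν) := by
      intro φ
      rw [← hmp.integral_comp e.measurableEmbedding (fun z => φ (e.symm z))]
      congr 1; funext x; exact congrArg φ (e.symm_apply_apply x).symm
    -- Fubini for exp
    have hexpint : Integrable (fun z => Real.exp (s * g z)) (μ0.prod ν) := by
      apply bdd_integrable _ _ (by fun_prop) (Real.exp (|s| * M))
      intro z
      rw [abs_of_pos (Real.exp_pos _)]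
      apply Real.exp_le_exp.mpr
      calc s * g z ≤ |s * g z| := le_abs_self _
        _ = |s| * |g z| := abs_mul _ _
        _ ≤ |s| * M := mul_le_mul_of_nonneg_left (hgbd z) (abs_nonneg s)
    -- apply IH to each section
    have hIH : ∀ x : Ω 0, ∫ y, Real.exp (s * g (x, y)) ∂ν
        ≤ Real.exp (s * F x + s ^ 2 * C ^ 2 * k / 8) := by
      intro x
      exact ih (fun j => Ω ((0 : Fin (k+1)).succAbove j))
        (fun j => μ ((0 : Fin (k+1)).succAbove j)) (fun y => g (x, y))
        (hgmeas.comp measurable_prodMk_left) C hC (hsectionLip x) s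
    calc ∫ ω, Real.exp (s * f ω) ∂(Measure.pi μ)
        = ∫ z, Real.exp (s * g z) ∂(μ0.prod ν) := hchange _
      _ = ∫ x, ∫ y, Real.exp (s * g (x, y)) ∂ν ∂μ0 := integral_prod _ hexpint
      _ ≤ ∫ x, Real.exp (s * F x + s ^ 2 * C ^ 2 * k / 8) ∂μ0 := by
          apply integral_mono hexpint.integral_prod_left _ hIH
          apply bdd_integrable _ _ (by fun_prop) (Real.exp (|s| * M + s ^ 2 * C ^ 2 * k / 8))
          intro x
          rw [abs_of_pos (Real.exp_pos _)]
          apply Real.exp_le_exp.mpr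
          have h1 : s * F x ≤ |s| * M := by
            calc s * F x ≤ |s * F x| := le_abs_self _
              _ = |s| * |F x| := abs_mul _ _
              _ ≤ |s| * M := mul_le_mul_of_nonneg_left (hFbd x) (abs_nonneg s)
          linarith
      _ = Real.exp (s ^ 2 * C ^ 2 * k / 8) * ∫ x, Real.exp (s * F x) ∂μ0 := by
          rw [← integral_const_mul]
          congr 1
          funext x
          rw [← Real.exp_add]
          ring_nf
      _ ≤ Real.exp (s ^ 2 * C ^ 2 * k / 8) *
            Real.exp (s * ∫ x, F x ∂μ0 + s ^ 2 * C ^ 2 / 8) := by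
          apply mul_le_mul_of_nonneg_left _ (Real.exp_pos _).le
          -- Hoeffding applied to F
          obtain ⟨x₀⟩ : Nonempty (Ω 0) := inferInstance
          have hbddF : BddBelow (Set.range F) := ⟨F x₀ - C, by
            rintro _ ⟨x, rfl⟩
            have := hFosc x₀ x
            have := abs_le.mp this
            linarith [this.2]⟩
          set a : ℝ := ⨅ x, F x with ha
          apply hoeffding' μ0 F hFmeas a C
          intro x
          constructor
          · exact ciInf_le hbddF x
          · have : a ≥ F x - C := le_ciInf (fun x' => by
              have := abs_le.mp (hFosc x x'); linarith [this.1])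
            linarith
      _ = Real.exp (s * ∫ x, F x ∂μ0 + s ^ 2 * C ^ 2 * (k + 1) / 8) := by
          rw [← Real.exp_add]; ring_nf
      _ = Real.exp (s * ∫ ω, f ω ∂(Measure.pi μ) + s ^ 2 * C ^ 2 * (k + 1 : ℕ) / 8) := by
          congr 2
          · congr 1
            rw [hchange f, integral_prod _ hgint]
          · push_cast; ring


/-- McDiarmid's inequality: a C-Lipschitz function on a product of k probability
spaces deviates from its expectation by more than t with probability at most
2·exp(−2t²/(C²k)). -/
theorem statement12 (k : ℕ) (Ω : Fin k → Type*) [∀ i, MeasurableSpace (Ω i)]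
    (μ : ∀ i, Measure (Ω i)) [∀ i, IsProbabilityMeasure (μ i)]
    (f : (∀ i, Ω i) → ℝ) (hf : Measurable f) (C : ℝ) (hC : 0 < C)
    (hLip : ∀ (ω ω' : ∀ i, Ω i) (i : Fin k),
      (∀ j, j ≠ i → ω j = ω' j) → |f ω - f ω'| ≤ C)
    (t : ℝ) (ht : 0 < t) :
    Measure.pi μ {ω | t < |f ω - ∫ x, f x ∂(Measure.pi μ)|}
      ≤ ENNReal.ofReal (2 * Real.exp (-2 * t ^ 2 / (C ^ 2 * k))) := by
  set Pa := Measure.pi μ with hPaa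
  haveI : IsProbabilityMeasure Pa := by rw [hPaa]; infer_instance
  rcases Nat.eq_zero_or_pos k with hk0 | hkpos
  · subst hk0
    calc Pa {ω | t < |f ω - ∫ x, f x ∂Pa|} ≤ 1 := prob_le_one
      _ ≤ ENNReal.ofReal (2 * Real.exp (-2 * t ^ 2 / (C ^ 2 * (0 : ℕ)))) := by
          simp only [Nat.cast_zero, mul_zero, div_zero, Real.exp_zero, mul_one]
          exact ENNReal.one_le_ofReal.mpr (by norm_num)
  · -- boundedness of f
    haveI : ∀ i, Nonempty (Ω i) := by
      intro i
      by_contra hne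
      rw [not_nonempty_iff] at hne
      have h1 : (μ i) Set.univ = 1 := measure_univ
      rw [Set.univ_eq_empty_iff.mpr hne, measure_empty] at h1
      exact zero_ne_one h1
    obtain ⟨ω₀⟩ : Nonempty (∀ i, Ω i) := ⟨fun i => Classical.arbitrary _⟩
    set M : ℝ := |f ω₀| + k * C with hM
    have hfbd : ∀ ω, |f ω| ≤ M := by
      intro ω
      have h1 := osc f C hLip ω ω₀
      calc |f ω| ≤ |f ω - f ω₀| + |f ω₀| := by
            have := abs_add_le (f ω - f ω₀) (f ω₀); simpa using this
        _ ≤ k * C + |f ω₀| := by linarith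
        _ = M := by rw [hM]; ring
    have hfint : Integrable f Pa := bdd_integrable _ f hf M hfbd
    set m : ℝ := ∫ x, f x ∂Pa with hm
    have hd : (0:ℝ) < C ^ 2 * k := by positivity
    set s : ℝ := 4 * t / (C ^ 2 * k) with hs
    have hs0 : 0 < s := by positivity
    have hexpintf : ∀ g : (∀ i, Ω i) → ℝ, Measurable g → (∀ ω, |g ω| ≤ M) →
        Integrable (fun ω => Real.exp (s * g ω)) Pa := by
      intro g hg hgbd
      apply bdd_integrable _ _ (by fun_prop) (Real.exp (|s| * M))
      intro ω
      rw [abs_of_pos (Real.exp_pos _)]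
      apply Real.exp_le_exp.mpr
      calc s * g ω ≤ |s * g ω| := le_abs_self _
        _ = |s| * |g ω| := abs_mul _ _
        _ ≤ |s| * M := mul_le_mul_of_nonneg_left (hgbd ω) (abs_nonneg s)
    -- the common exponent bound
    have hkey : -s * t + s ^ 2 * C ^ 2 * k / 8 = -2 * t ^ 2 / (C ^ 2 * k) := by
      rw [hs]
      field_simp
      ring
    -- upper tail
    have hup : Pa {ω | m + t ≤ f ω} ≤ ENNReal.ofReal (Real.exp (-2 * t ^ 2 / (C ^ 2 * k))) := by
      rw [ENNReal.le_ofReal_iff_toReal_le (measure_ne_top Pa _) (Real.exp_pos _).le]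
      calc (Pa {ω | m + t ≤ f ω}).toReal
          ≤ Real.exp (-s * (m + t)) * ProbabilityTheory.mgf f Pa s :=
            ProbabilityTheory.measure_ge_le_exp_mul_mgf (m + t) hs0.le (hexpintf f hf hfbd)
        _ ≤ Real.exp (-s * (m + t)) * Real.exp (s * m + s ^ 2 * C ^ 2 * k / 8) := by
            apply mul_le_mul_of_nonneg_left _ (Real.exp_pos _).le
            exact mgf_bound k Ω μ f hf C hC.le hLip s
        _ = Real.exp (-s * t + s ^ 2 * C ^ 2 * k / 8) := by
            rw [← Real.exp_add]; ring_nf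
        _ = Real.exp (-2 * t ^ 2 / (C ^ 2 * k)) := by rw [hkey]
    -- lower tail
    have hnegLip : ∀ (ω ω' : ∀ i, Ω i) (i : Fin k),
        (∀ j, j ≠ i → ω j = ω' j) → |(-f) ω - (-f) ω'| ≤ C := by
      intro ω ω' i h
      have h2 : (-f) ω - (-f) ω' = f ω' - f ω := by simp only [Pi.neg_apply]; ring
      rw [h2]
      exact hLip ω' ω i (fun j hj => (h j hj).symm)
    have hnegint : ∫ x, (-f) x ∂Pa = -m := by
      rw [hm]
      exact integral_neg f
    have hlo : Pa {ω | t - m ≤ -f ω} ≤ ENNReal.ofReal (Real.exp (-2 * t ^ 2 / (C ^ 2 * k))) := by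
      rw [ENNReal.le_ofReal_iff_toReal_le (measure_ne_top Pa _) (Real.exp_pos _).le]
      calc (Pa {ω | t - m ≤ (-f) ω}).toReal
          ≤ Real.exp (-s * (t - m)) * ProbabilityTheory.mgf (-f) Pa s :=
            ProbabilityTheory.measure_ge_le_exp_mul_mgf (t - m) hs0.le
              (hexpintf (-f) hf.neg (fun ω => by simpa using hfbd ω))
        _ ≤ Real.exp (-s * (t - m)) * Real.exp (s * ∫ x, (-f) x ∂Pa + s ^ 2 * C ^ 2 * k / 8) := by
            apply mul_le_mul_of_nonneg_left _ (Real.exp_pos _).le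
            exact mgf_bound k Ω μ (-f) hf.neg C hC.le hnegLip s
        _ = Real.exp (-s * t + s ^ 2 * C ^ 2 * k / 8) := by
            rw [hnegint, ← Real.exp_add]; ring_nf
        _ = Real.exp (-2 * t ^ 2 / (C ^ 2 * k)) := by rw [hkey]
    -- union bound
    have hsub : {ω | t < |f ω - m|} ⊆ {ω | m + t ≤ f ω} ∪ {ω | t - m ≤ -f ω} := by
      intro ω hω
      simp only [Set.mem_setOf_eq] at hω
      rcases le_or_gt 0 (f ω - m) with h | h
      · left
        rw [Set.mem_setOf_eq]
        rw [abs_of_nonneg h] at hω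
        linarith
      · right
        rw [Set.mem_setOf_eq]
        rw [abs_of_neg h] at hω
        linarith
    calc Pa {ω | t < |f ω - m|}
        ≤ Pa ({ω | m + t ≤ f ω} ∪ {ω | t - m ≤ -f ω}) := measure_mono hsub
      _ ≤ Pa {ω | m + t ≤ f ω} + Pa {ω | t - m ≤ -f ω} := measure_union_le _ _
      _ ≤ ENNReal.ofReal (Real.exp (-2 * t ^ 2 / (C ^ 2 * k)))
          + ENNReal.ofReal (Real.exp (-2 * t ^ 2 / (C ^ 2 * k))) := add_le_add hup hlo
      _ = ENNReal.ofReal (2 * Real.exp (-2 * t ^ 2 / (C ^ 2 * k))) := by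
          rw [← ENNReal.ofReal_add (Real.exp_pos _).le (Real.exp_pos _).le]
          ring_nf
end

section
/- Let ε ∈ (0, 10⁻³) and n sufficiently large. Consider the family of ℓ = ⌊C(n,2)/((1/2 + 2√ε)n)⌋ copies of the star with (1/2 + 2√ε)n edges. Then this family, whose total number of edges lies between C(n,2) − n and C(n,2), does not pack into K_{(1+ε)n}. -/
open Finset


lemma statement19_aux (ε r x L M : ℝ) (hε0 : 0 < ε) (hε1 : ε < 1 / 1000)
    (hr0 : 0 < r) (hr2 : r ^ 2 = ε) (hεn : 1 < ε * x) (hx0 : 0 < x)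
    (hcount : L * ((1 / 2 + 2 * r) * x) + M * (M - 1) / 2
      ≤ ((1 + ε) * x) * ((1 + ε) * x - 1) / 2)
    (hls : x * (x - 1) / 2 - x ≤ L * ((1 / 2 + 2 * r) * x))
    (hMge : 3 * r * x ≤ M) : False := by
  have hr31 : r < 1 / 31 := by nlinarith
  have hrn : 31 < r * x := by nlinarith [mul_pos hr0 hx0]
  have hM1 : (1 : ℝ) ≤ 3 * r * x := by nlinarith
  have hMM : (3 * r * x) * (3 * r * x - 1) ≤ M * (M - 1) := by
    nlinarith [mul_nonneg (sub_nonneg.2 hMge) (by linarith : (0 : ℝ) ≤ M + 3 * r * x - 1)]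
  have hεx2 : x < ε * x * x := by nlinarith
  have hrx : r * x < x / 31 := by nlinarith
  nlinarith [hεx2, hrx, mul_pos hε0 (mul_pos hx0 hx0),
    mul_lt_mul_of_pos_left hε1 (mul_pos hε0 (mul_pos hx0 hx0))]

set_option maxHeartbeats 1000000 in
/-- For ε ∈ (0,10⁻³) and n sufficiently large, the family of ⌊C(n,2)/((1/2+2√ε)n)⌋
copies of the star with (1/2+2√ε)n edges has total number of edges between
C(n,2) − n and C(n,2), yet it does not pack into K_{(1+ε)n}. The star with s edges
is modelled on Fin (s+1) with centre 0; a packing is a family of injective maps with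
pairwise edge-disjoint images of the star edges. -/
theorem statement19 (ε : ℝ) (hε0 : 0 < ε) (hε1 : ε < 1 / 1000) :
    ∃ n₀ : ℕ, ∀ n : ℕ, n₀ ≤ n → ∀ s N : ℕ,
      (s : ℝ) = (1 / 2 + 2 * Real.sqrt ε) * n →
      (N : ℝ) = (1 + ε) * n →
      ((n.choose 2 : ℝ) - n ≤ ((n.choose 2 / s) * s : ℕ) ∧
        (((n.choose 2 / s) * s : ℕ) : ℝ) ≤ (n.choose 2 : ℝ)) ∧
      ¬ ∃ f : Fin (n.choose 2 / s) → Fin (s + 1) → Fin N,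
          (∀ i, Function.Injective (f i)) ∧
          (∀ i j, i ≠ j → ∀ a b c e : Fin (s + 1),
            a ≠ b → (a = 0 ∨ b = 0) → c ≠ e → (c = 0 ∨ e = 0) →
            s(f i a, f i b) ≠ s(f j c, f j e)) := by
  classical
  obtain ⟨n₁, hn₁⟩ := exists_nat_gt (1 / ε)
  refine ⟨n₁ + 1, fun n hn s N hs hN => ?_⟩
  set r := Real.sqrt ε with hrdef
  have hr0 : 0 < r := Real.sqrt_pos.2 hε0
  have hr2 : r ^ 2 = ε := Real.sq_sqrt hε0.le
  have hr31 : r < 1 / 31 := by nlinarith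
  have hxn : (1 / ε : ℝ) < n := by
    have h1 : ((n₁ : ℝ)) < ((n₁ + 1 : ℕ) : ℝ) := by push_cast; linarith
    have h2 : ((n₁ + 1 : ℕ) : ℝ) ≤ n := Nat.cast_le.2 hn
    linarith
  have hx0 : (0 : ℝ) < n := lt_trans (by positivity) hxn
  have hεn : 1 < ε * n := by
    rw [div_lt_iff₀ hε0] at hxn; linarith
  have hs0 : 0 < s := by
    have : (0 : ℝ) < (s : ℝ) := by rw [hs]; nlinarith
    exact_mod_cast this
  set ℓ := n.choose 2 / s with hℓdef
  have hds : ℓ * s ≤ n.choose 2 := Nat.div_mul_le_self _ _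
  have hds2 : n.choose 2 < ℓ * s + s := by
    rw [mul_comm]
    have h0 := Nat.div_add_mod (n.choose 2) s
    rw [← hℓdef] at h0
    have hm := Nat.mod_lt (n.choose 2) hs0
    omega
  have hsn : (s : ℝ) ≤ n := by rw [hs]; nlinarith
  have hch : (n.choose 2 : ℝ) = n * (n - 1) / 2 := Nat.cast_choose_two ℝ n
  have hlower : (n.choose 2 : ℝ) - n ≤ ((ℓ * s : ℕ) : ℝ) := by
    have h2 : ((n.choose 2 : ℕ) : ℝ) < (ℓ * s : ℕ) + s := by exact_mod_cast hds2
    push_cast at h2 ⊢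
    linarith
  have hupper : ((ℓ * s : ℕ) : ℝ) ≤ (n.choose 2 : ℝ) := by exact_mod_cast hds
  refine ⟨⟨hlower, hupper⟩, ?_⟩
  rintro ⟨f, hinj, hdisj⟩
  -- centres and the untouched set W
  set C : Finset (Fin N) := (univ : Finset (Fin ℓ)).image (fun i => f i 0) with hCdef
  have hCcard : C.card ≤ ℓ := le_trans Finset.card_image_le (by simp)
  set W : Finset (Fin N) := univ \ C with hWdef
  have hWcard : W.card = N - C.card := by
    rw [hWdef, Finset.card_sdiff_of_subset (Finset.subset_univ _), Finset.card_univ, Fintype.card_fin]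
  -- the packed edges
  set φ : Fin ℓ × Fin (s + 1) → Sym2 (Fin N) := fun p => s(f p.1 0, f p.1 p.2) with hφdef
  set S : Finset (Fin ℓ × Fin (s + 1)) :=
    (univ : Finset (Fin ℓ)) ×ˢ ((univ : Finset (Fin (s + 1))).erase 0) with hSdef
  have hScard : S.card = ℓ * s := by
    rw [hSdef, Finset.card_product, Finset.card_univ, Fintype.card_fin,
      Finset.card_erase_of_mem (Finset.mem_univ _), Finset.card_univ, Fintype.card_fin,
      Nat.add_sub_cancel]
  have hmemS : ∀ p : Fin ℓ × Fin (s + 1), p ∈ S ↔ p.2 ≠ 0 := by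
    intro p
    simp [hSdef, Finset.mem_product]
  have hφinj : Set.InjOn φ S := by
    rintro ⟨i, a⟩ hia ⟨j, b⟩ hjb h
    have ha : a ≠ 0 := (hmemS _).1 hia
    have hb : b ≠ 0 := (hmemS _).1 hjb
    by_cases hij : i = j
    · subst hij
      simp only [hφdef, Sym2.eq_iff] at h
      rcases h with ⟨-, h2⟩ | ⟨-, h2⟩
      · exact Prod.ext rfl (hinj i h2)
      · exact absurd (hinj i h2) ha
    · exact absurd h (hdisj i j hij 0 a 0 b (Ne.symm ha) (Or.inl rfl) (Ne.symm hb) (Or.inl rfl))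
  set E : Finset (Sym2 (Fin N)) := S.image φ with hEdef
  have hEcard : E.card = ℓ * s := by
    rw [hEdef, Finset.card_image_of_injOn hφinj, hScard]
  set A : Finset (Sym2 (Fin N)) := (⊤ : SimpleGraph (Fin N)).edgeFinset with hAdef
  have hAcard : A.card = N.choose 2 := by
    rw [hAdef, SimpleGraph.card_edgeFinset_top_eq_card_choose_two, Fintype.card_fin]
  set D : Finset (Sym2 (Fin N)) := A.filter (fun e => ∀ u ∈ e, u ∈ W) with hDdef
  have hEA : E ⊆ A := by
    intro e he
    rw [hEdef, Finset.mem_image] at he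
    obtain ⟨p, hp, rfl⟩ := he
    have hp2 : p.2 ≠ 0 := (hmemS _).1 hp
    have hne : f p.1 0 ≠ f p.1 p.2 := fun h => hp2 (hinj p.1 h).symm
    rw [hAdef, SimpleGraph.mem_edgeFinset]
    rw [hφdef]
    rw [SimpleGraph.mem_edgeSet, SimpleGraph.top_adj]
    exact hne
  have hED : Disjoint E D := by
    rw [Finset.disjoint_left]
    intro e he heD
    rw [hEdef, Finset.mem_image] at he
    obtain ⟨p, hp, rfl⟩ := he
    rw [hDdef, Finset.mem_filter] at heD
    have hW0 : f p.1 0 ∈ W := heD.2 (f p.1 0) (Sym2.mem_mk_left _ _)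
    rw [hWdef, Finset.mem_sdiff] at hW0
    exact hW0.2 (Finset.mem_image.2 ⟨p.1, Finset.mem_univ _, rfl⟩)
  have hcount : ℓ * s + D.card ≤ N.choose 2 := by
    have h1 : (E ∪ D).card = E.card + D.card := Finset.card_union_of_disjoint hED
    have h2 : E ∪ D ⊆ A := Finset.union_subset hEA (Finset.filter_subset _ _)
    have h3 := Finset.card_le_card h2
    rw [h1, hEcard, hAcard] at h3
    exact h3
  -- lower bound on D.card
  have hDge : W.card.choose 2 ≤ D.card := by
    have hcardW : Fintype.card {x // x ∈ W} = W.card := Fintype.card_coe W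
    have hle := Finset.card_le_card_of_injOn (Sym2.map (Subtype.val : {x // x ∈ W} → Fin N))
      (s := (⊤ : SimpleGraph {x // x ∈ W}).edgeFinset) (t := D) ?_ ?_
    · rwa [SimpleGraph.card_edgeFinset_top_eq_card_choose_two, hcardW] at hle
    · intro e he
      rw [Finset.mem_coe, SimpleGraph.mem_edgeFinset] at he
      rw [hDdef, Finset.mem_coe, Finset.mem_filter]
      refine ⟨?_, ?_⟩
      · rw [hAdef, SimpleGraph.mem_edgeFinset, SimpleGraph.edgeSet_top, Set.mem_compl_iff, Sym2.mem_diagSet,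
          Sym2.isDiag_map Subtype.val_injective]
        exact SimpleGraph.not_isDiag_of_mem_edgeSet _ he
      · intro u hu
        rw [Sym2.mem_map] at hu
        obtain ⟨a, -, rfl⟩ := hu
        exact a.2
    · exact (Sym2.map.injective Subtype.val_injective).injOn
  -- real arithmetic
  have hq0 : (0 : ℝ) < (1 / 2 + 2 * r) * n := by nlinarith
  have hℓN : (ℓ : ℝ) < (1 - 3 * r) * n := by
    have h1 : (ℓ : ℝ) * ((1 / 2 + 2 * r) * n) ≤ n * (n - 1) / 2 := by
      have h1' : ((ℓ * s : ℕ) : ℝ) ≤ (n.choose 2 : ℝ) := by exact_mod_cast hds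
      push_cast at h1'
      rw [hs] at h1'
      rw [hch] at h1'
      linarith
    have h2 : (n : ℝ) * (n - 1) / 2 < ((1 - 3 * r) * n) * ((1 / 2 + 2 * r) * n) := by
      nlinarith [mul_pos (mul_pos hr0 hx0) hx0, mul_pos hr0 (mul_pos (mul_pos hr0 hx0) hx0)]
    exact lt_of_mul_lt_mul_right (lt_of_le_of_lt h1 h2) hq0.le
  have hℓleN : ℓ ≤ N := by
    have : (ℓ : ℝ) ≤ (N : ℝ) := by
      rw [hN]; nlinarith [mul_pos hε0 hx0, mul_pos hr0 hx0]
    exact_mod_cast this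
  have hDgeNat : (N - ℓ).choose 2 ≤ D.card :=
    le_trans (Nat.choose_le_choose 2 (by omega)) hDge
  have hcount2 : ℓ * s + (N - ℓ).choose 2 ≤ N.choose 2 := by omega
  have hMch : (((N - ℓ : ℕ)).choose 2 : ℝ) = ((N - ℓ : ℕ) : ℝ) * (((N - ℓ : ℕ) : ℝ) - 1) / 2 :=
    Nat.cast_choose_two ℝ _
  have hNch : (N.choose 2 : ℝ) = (N : ℝ) * ((N : ℝ) - 1) / 2 := Nat.cast_choose_two ℝ N
  have hcount' : (ℓ : ℝ) * ((1 / 2 + 2 * r) * n) + ((N - ℓ : ℕ) : ℝ) * (((N - ℓ : ℕ) : ℝ) - 1) / 2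
      ≤ ((1 + ε) * n) * ((1 + ε) * n - 1) / 2 := by
    have h1 : ((ℓ * s : ℕ) : ℝ) + ((N - ℓ).choose 2 : ℝ) ≤ (N.choose 2 : ℝ) := by
      exact_mod_cast hcount2
    rw [hMch, hNch, hN] at h1
    have h2 : ((ℓ * s : ℕ) : ℝ) = (ℓ : ℝ) * ((1 / 2 + 2 * r) * n) := by
      push_cast
      rw [hs]
    rw [h2] at h1
    exact h1
  have hMge : 3 * r * n ≤ ((N - ℓ : ℕ) : ℝ) := by
    rw [Nat.cast_sub hℓleN, hN]
    nlinarith [mul_pos hε0 hx0]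
  have hℓsge : (n : ℝ) * ((n : ℝ) - 1) / 2 - n ≤ (ℓ : ℝ) * ((1 / 2 + 2 * r) * n) := by
    have h := hlower
    push_cast at h
    rw [hch] at h
    rw [hs] at h
    linarith
  exact statement19_aux ε r n ℓ ((N - ℓ : ℕ) : ℝ) hε0 hε1 hr0 hr2 hεn hx0 hcount' hℓsge hMge
end
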